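/- arXiv:2508.15143 — 4 statements merged into one kernel-verified Lean document; each statement's English description precedes it below -/
import Mathlib

section
/- The measure μ₄ is invariant under the logistic map f₄: the pushforward of μ₄ under f₄ equals μ₄, i.e. (f₄)_* μ₄ = μ₄, where f₄(x) = 4x(1−x) and μ₄ is the measure on ℝ with density ρ₄(x) = (1/π)·(x(1−x))^(−1/2) on (0,1). -/
open MeasureTheory Real

/-- The logistic map `f₄`. -/
noncomputable def f4 (x : ℝ) : ℝ := 4 * x * (1 - x)

/-- Invariant density of the ergodic logistic map `f₄`. -/
noncomputable def rho4 (x : ℝ) : ℝ := (1 / Real.pi) * (x * (1 - x)) ^ (-(1:ℝ)/2)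

/-- The measure on `ℝ` given by Lebesgue measure restricted to `(0,1)` with density `rho4`. -/
noncomputable def mu4 : Measure ℝ :=
  (volume.restrict (Set.Ioo (0:ℝ) 1)).withDensity fun x => ENNReal.ofReal (rho4 x)

section Aux

/-- The conjugating homeomorphism `(0,1) → (0,1)`. -/
noncomputable def hh (t : ℝ) : ℝ := Real.sin (Real.pi * t / 2) ^ 2

/-- Inverse of `hh` on `(0,1)`. -/
noncomputable def gg (y : ℝ) : ℝ := (2 / Real.pi) * Real.arcsin (Real.sqrt y)

/-- The tent map. -/
noncomputable def tent (x : ℝ) : ℝ := if x ≤ 1/2 then 2 * x else 2 - 2 * x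

lemma hh_cont : Continuous hh := by
  unfold hh; fun_prop

lemma hh_meas : Measurable hh := hh_cont.measurable

lemma gg_meas : Measurable gg := by
  unfold gg
  exact (Real.continuous_arcsin.comp Real.continuous_sqrt).measurable.const_mul _

lemma f4_meas : Measurable f4 := by
  unfold f4; fun_prop

lemma tent_meas : Measurable tent := by
  unfold tent
  exact Measurable.ite (measurableSet_le measurable_id measurable_const)
    (measurable_id.const_mul 2) ((measurable_id.const_mul 2).const_sub 2)

lemma hh_mem {t : ℝ} (ht : t ∈ Set.Ioo (0:ℝ) 1) : hh t ∈ Set.Ioo (0:ℝ) 1 := by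
  obtain ⟨h0, h1⟩ := ht
  have hpi := Real.pi_pos
  have hu0 : 0 < Real.pi * t / 2 := by positivity
  have hu1 : Real.pi * t / 2 < Real.pi / 2 := by nlinarith
  have hs0 : 0 < Real.sin (Real.pi * t / 2) :=
    Real.sin_pos_of_pos_of_lt_pi hu0 (by nlinarith)
  have hs1 : Real.sin (Real.pi * t / 2) < 1 := by
    have hmem1 : Real.pi * t / 2 ∈ Set.Icc (-(Real.pi/2)) (Real.pi/2) := by
      constructor <;> nlinarith
    have hmem2 : Real.pi / 2 ∈ Set.Icc (-(Real.pi/2)) (Real.pi/2) := by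
      constructor <;> nlinarith
    have := Real.strictMonoOn_sin hmem1 hmem2 hu1
    rwa [Real.sin_pi_div_two] at this
  exact ⟨by unfold hh; positivity, by unfold hh; nlinarith⟩

lemma gg_hh {t : ℝ} (ht : t ∈ Set.Ioo (0:ℝ) 1) : gg (hh t) = t := by
  obtain ⟨h0, h1⟩ := ht
  have hpi := Real.pi_pos
  have hs0 : 0 ≤ Real.sin (Real.pi * t / 2) := by
    apply Real.sin_nonneg_of_nonneg_of_le_pi <;> nlinarith
  unfold gg hh
  rw [Real.sqrt_sq hs0, Real.arcsin_sin (by nlinarith) (by nlinarith)]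
  field_simp

lemma hh_gg {y : ℝ} (hy : y ∈ Set.Ioo (0:ℝ) 1) : hh (gg y) = y := by
  obtain ⟨h0, h1⟩ := hy
  have hpi := Real.pi_pos
  have h2 : Real.pi * ((2 / Real.pi) * Real.arcsin (Real.sqrt y)) / 2
      = Real.arcsin (Real.sqrt y) := by field_simp
  unfold hh gg
  rw [h2, Real.sin_arcsin (le_trans (by norm_num) (Real.sqrt_nonneg y))
    (Real.sqrt_le_one.mpr h1.le),
    Real.sq_sqrt h0.le]

lemma gg_deriv {y : ℝ} (hy : y ∈ Set.Ioo (0:ℝ) 1) :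
    HasDerivAt gg (rho4 y) y := by
  obtain ⟨h0, h1⟩ := hy
  have hpi := Real.pi_pos
  have hy1 : 0 < 1 - y := by linarith
  have hsq : Real.sqrt y ≠ 0 := by positivity
  have hsqlt : Real.sqrt y < 1 := by
    rw [show (1:ℝ) = Real.sqrt 1 by simp]
    exact Real.sqrt_lt_sqrt h0.le h1
  have hd1 : HasDerivAt Real.sqrt (1 / (2 * Real.sqrt y)) y :=
    Real.hasDerivAt_sqrt (ne_of_gt h0)
  have hd2 : HasDerivAt Real.arcsin (1 / Real.sqrt (1 - Real.sqrt y ^ 2)) (Real.sqrt y) :=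
    Real.hasDerivAt_arcsin
      (ne_of_gt (lt_of_lt_of_le (by norm_num) (Real.sqrt_nonneg y))) (ne_of_lt hsqlt)
  have hd3 : HasDerivAt gg (2 / Real.pi * (1 / Real.sqrt (1 - Real.sqrt y ^ 2) * (1 / (2 * Real.sqrt y)))) y :=
    (hd2.comp y hd1).const_mul (2 / Real.pi)
  convert hd3 using 1
  rw [Real.sq_sqrt h0.le]
  unfold rho4
  rw [show -(1:ℝ)/2 = -(1/2) by norm_num, Real.rpow_neg (by nlinarith),
    ← Real.sqrt_eq_rpow, Real.sqrt_mul h0.le]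
  have h1s : Real.sqrt (1 - y) ≠ 0 := by positivity
  field_simp

lemma gg_inj : Set.InjOn gg (Set.Ioo (0:ℝ) 1) := by
  intro a ha b hb hab
  have h1 : hh (gg a) = hh (gg b) := by rw [hab]
  rwa [hh_gg ha, hh_gg hb] at h1

lemma gg_image : gg '' Set.Ioo (0:ℝ) 1 = Set.Ioo (0:ℝ) 1 := by
  apply Set.Subset.antisymm
  · rintro _ ⟨y, ⟨h0, h1⟩, rfl⟩
    have hpi := Real.pi_pos
    have ha0 : 0 < Real.arcsin (Real.sqrt y) := Real.arcsin_pos.2 (by positivity)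
    have hsqlt : Real.sqrt y < 1 := by
      rw [show (1:ℝ) = Real.sqrt 1 by simp]
      exact Real.sqrt_lt_sqrt h0.le h1
    have ha1 : Real.arcsin (Real.sqrt y) < Real.pi / 2 :=
      Real.arcsin_lt_pi_div_two.2 hsqlt
    constructor
    · unfold gg; positivity
    · unfold gg
      rw [show (1:ℝ) = (2 / Real.pi) * (Real.pi / 2) by field_simp]
      exact mul_lt_mul_of_pos_left ha1 (by positivity)
  · intro t ht
    exact ⟨hh t, hh_mem ht, gg_hh ht⟩

lemma map_gg_mu4 : Measure.map gg mu4 = volume.restrict (Set.Ioo (0:ℝ) 1) := by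
  have hs : MeasurableSet (Set.Ioo (0:ℝ) 1) := measurableSet_Ioo
  have key := MeasureTheory.map_withDensity_abs_det_fderiv_eq_addHaar
    (E := ℝ) volume hs.nullMeasurableSet
    (f' := fun x => (1 : ℝ →L[ℝ] ℝ).smulRight (rho4 x))
    (fun x hx => ((gg_deriv hx).hasFDerivAt).hasFDerivWithinAt)
    gg_inj
  rw [gg_image] at key
  rw [← key]
  congr 1
  apply withDensity_congr_ae
  filter_upwards [ae_restrict_mem hs] with x hx
  rw [ContinuousLinearMap.det_smulRight, ContinuousLinearMap.one_apply, one_mul, abs_of_nonneg]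
  obtain ⟨h0, h1⟩ := hx
  have hpi := Real.pi_pos
  have hb : (0:ℝ) < x * (1 - x) := by nlinarith
  unfold rho4
  exact mul_nonneg (by positivity) (Real.rpow_pos_of_pos hb _).le

lemma mu4_ae_mem : ∀ᵐ x ∂mu4, x ∈ Set.Ioo (0:ℝ) 1 := by
  have h1 : mu4 ≪ volume.restrict (Set.Ioo (0:ℝ) 1) :=
    withDensity_absolutelyContinuous _ _
  exact h1.ae_le (ae_restrict_mem measurableSet_Ioo)

lemma mu4_eq_map_hh : mu4 = Measure.map hh (volume.restrict (Set.Ioo (0:ℝ) 1)) := by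
  have h1 : Measure.map hh (Measure.map gg mu4) = mu4 := by
    rw [Measure.map_map hh_meas gg_meas]
    have h2 : (hh ∘ gg) =ᵐ[mu4] id := by
      filter_upwards [mu4_ae_mem] with x hx
      exact hh_gg hx
    rw [Measure.map_congr h2, Measure.map_id]
  rw [← h1, map_gg_mu4]

lemma f4_comp_hh : f4 ∘ hh = hh ∘ tent := by
  funext x
  have key : (f4 ∘ hh) x = Real.sin (Real.pi * x) ^ 2 := by
    simp only [Function.comp, f4, hh]
    have h1 := Real.sin_two_mul (Real.pi * x / 2)
    rw [show 2 * (Real.pi * x / 2) = Real.pi * x by ring] at h1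
    rw [h1, mul_pow, mul_pow, Real.cos_sq']
    ring
  rw [key]
  simp only [Function.comp, hh, tent]
  split_ifs with h
  · congr 1; ring_nf
  · have h3 : Real.pi * (2 - 2 * x) / 2 = Real.pi - Real.pi * x := by ring
    rw [h3, Real.sin_pi_sub]

lemma inter_Ioc_ae : ∀ (t : Set ℝ),
    volume (t ∩ Set.Ioc (0:ℝ) 1) = volume (t ∩ Set.Ioo (0:ℝ) 1) := by
  intro t
  apply measure_congr
  exact (Filter.EventuallyEq.refl _ _).inter Ioo_ae_eq_Ioc.symm

lemma map_tent : Measure.map tent (volume.restrict (Set.Ioo (0:ℝ) 1))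
    = volume.restrict (Set.Ioo (0:ℝ) 1) := by
  ext t ht
  rw [Measure.map_apply tent_meas ht, Measure.restrict_apply (tent_meas ht),
    Measure.restrict_apply ht]
  have hsplit : tent ⁻¹' t ∩ Set.Ioo 0 1
      = (((2:ℝ) * ·) ⁻¹' (t ∩ Set.Ioc 0 1))
        ∪ ((fun x : ℝ => 2 - 2 * x) ⁻¹' (t ∩ Set.Ioo 0 1)) := by
    ext x
    simp only [Set.mem_inter_iff, Set.mem_preimage, Set.mem_union, Set.mem_Ioo, Set.mem_Ioc,
      tent]
    constructor
    · rintro ⟨hx, h0, h1⟩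
      by_cases hle : x ≤ 1/2
      · left; rw [if_pos hle] at hx; exact ⟨hx, by linarith, by linarith⟩
      · right; rw [if_neg hle] at hx; push_neg at hle
        exact ⟨hx, by linarith, by linarith⟩
    · rintro (⟨hx, h0, h1⟩ | ⟨hx, ⟨h0, h1⟩⟩)
      · have hle : x ≤ 1/2 := by linarith
        exact ⟨by rw [if_pos hle]; exact hx, by linarith, by linarith⟩
      · have hle : ¬ x ≤ 1/2 := by push_neg; linarith
        exact ⟨by rw [if_neg hle]; exact hx, by linarith, by linarith⟩
  have hBset : (fun x : ℝ => 2 - 2 * x) ⁻¹' (t ∩ Set.Ioo 0 1)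
      = ((-2:ℝ) * ·) ⁻¹' (((2:ℝ) + ·) ⁻¹' (t ∩ Set.Ioo 0 1)) := by
    ext x; simp only [Set.mem_preimage]
    rw [show (2:ℝ) + (-2) * x = 2 - 2 * x by ring]
  have hmB : MeasurableSet ((fun x : ℝ => 2 - 2 * x) ⁻¹' (t ∩ Set.Ioo 0 1)) := by
    have : Measurable fun x : ℝ => 2 - 2 * x := by fun_prop
    exact this (ht.inter measurableSet_Ioo)
  have hdisj : Disjoint (((2:ℝ) * ·) ⁻¹' (t ∩ Set.Ioc 0 1))
      ((fun x : ℝ => 2 - 2 * x) ⁻¹' (t ∩ Set.Ioo 0 1)) := by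
    rw [Set.disjoint_left]
    intro x hxA hxB
    simp only [Set.mem_preimage, Set.mem_inter_iff, Set.mem_Ioc, Set.mem_Ioo] at hxA hxB
    linarith [hxA.2.2, hxB.2.2]
  rw [hsplit, measure_union hdisj hmB, hBset,
    Real.volume_preimage_mul_left (two_ne_zero : (2:ℝ) ≠ 0) (t ∩ Set.Ioc 0 1),
    Real.volume_preimage_mul_left (by norm_num : (-2:ℝ) ≠ 0),
    measure_preimage_add, inter_Ioc_ae t]
  have h2 : ENNReal.ofReal |(2:ℝ)⁻¹| = 2⁻¹ := by
    rw [abs_of_pos (by norm_num : (0:ℝ) < 2⁻¹), ENNReal.ofReal_inv_of_pos two_pos,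
      ENNReal.ofReal_ofNat 2]
  have h2' : ENNReal.ofReal |(-2:ℝ)⁻¹| = 2⁻¹ := by
    rw [show ((-2:ℝ)⁻¹) = -(2⁻¹) by norm_num, abs_neg]
    exact h2
  rw [h2, h2', ← two_mul, ← mul_assoc,
    ENNReal.mul_inv_cancel (two_ne_zero) (ENNReal.ofNat_ne_top), one_mul]

end Aux

theorem mu4_invariant_under_f4 : Measure.map f4 mu4 = mu4 := by
  rw [mu4_eq_map_hh, Measure.map_map f4_meas hh_meas, f4_comp_hh,
    ← Measure.map_map hh_meas tent_meas, map_tent, ← mu4_eq_map_hh]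
end

section
/- Euler integral representation of the Kummer (confluent hypergeometric) function: for real parameters c > a > 0 and every real ξ, (Γ(c)/(Γ(a)Γ(c−a))) · ∫₀¹ x^{a−1}(1−x)^{c−a−1} e^{ξx} dx = Σ_{r=0}^∞ ((a)_r/((c)_r · r!)) ξ^r, where the series converges for all ξ. -/
open MeasureTheory Real

-- Gamma-Pochhammer relation
lemma Gamma_ascPoch (x : ℝ) (hx : 0 < x) : ∀ n : ℕ,
    Real.Gamma (x + n) = (ascPochhammer ℝ n).eval x * Real.Gamma x := by
  intro n
  induction n with
  | zero => simp
  | succ n ih =>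
      have hxn : (0:ℝ) < x + n := by positivity
      have : x + (n + 1 : ℕ) = (x + n) + 1 := by push_cast; ring
      rw [this, Real.Gamma_add_one hxn.ne', ih, ascPochhammer_succ_eval]
      ring

lemma ascPoch_mono {a c : ℝ} (ha : 0 < a) (hac : a ≤ c) (n : ℕ) :
    (ascPochhammer ℝ n).eval a ≤ (ascPochhammer ℝ n).eval c := by
  induction n with
  | zero => simp
  | succ n ih =>
      rw [ascPochhammer_succ_eval, ascPochhammer_succ_eval]
      have h1 : 0 < (ascPochhammer ℝ n).eval a := ascPochhammer_pos n a ha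
      have h2 : (0:ℝ) ≤ a + n := by positivity
      exact mul_le_mul ih (by linarith) h2 (ascPochhammer_pos n c (lt_of_lt_of_le ha hac)).le

-- complex integrand equals ofReal of real integrand on Ioc
lemma beta_integrand_eq {p q : ℝ} {x : ℝ} (hx0 : 0 ≤ x) (hx1 : x ≤ 1) :
    (x : ℂ) ^ ((p:ℂ) - 1) * (1 - (x:ℂ)) ^ ((q:ℂ) - 1)
      = ((x ^ (p - 1) * (1 - x) ^ (q - 1) : ℝ) : ℂ) := by
  have h1 : ((x ^ (p-1) : ℝ) : ℂ) = (x:ℂ) ^ ((p:ℂ) - 1) := by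
    rw [Complex.ofReal_cpow hx0]; push_cast; ring_nf
  have h2 : ((( 1 - x) ^ (q-1) : ℝ) : ℂ) = (1 - (x:ℂ)) ^ ((q:ℂ) - 1) := by
    rw [Complex.ofReal_cpow (by linarith)]; push_cast; ring_nf
  rw [Complex.ofReal_mul, h1, h2]

lemma betaReal_integrable {p q : ℝ} (hp : 0 < p) (hq : 0 < q) :
    IntegrableOn (fun x : ℝ => x ^ (p - 1) * (1 - x) ^ (q - 1)) (Set.Ioc 0 1) := by
  have h := Complex.betaIntegral_convergent (u := (p:ℂ)) (v := (q:ℂ))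
    (by simpa using hp) (by simpa using hq)
  rw [intervalIntegrable_iff_integrableOn_Ioc_of_le zero_le_one] at h
  have h2 : IntegrableOn (fun x : ℝ =>
      RCLike.re ((x : ℂ) ^ ((p:ℂ) - 1) * (1 - (x:ℂ)) ^ ((q:ℂ) - 1))) (Set.Ioc 0 1) := h.re
  refine h2.congr_fun (fun x hx => ?_) measurableSet_Ioc
  dsimp only
  rw [beta_integrand_eq hx.1.le hx.2]
  simp

lemma betaReal_eq {p q : ℝ} (hp : 0 < p) (hq : 0 < q) :
    ∫ x in Set.Ioc (0:ℝ) 1, x ^ (p - 1) * (1 - x) ^ (q - 1)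
      = Real.Gamma p * Real.Gamma q / Real.Gamma (p + q) := by
  have h := Complex.Gamma_mul_Gamma_eq_betaIntegral (s := (p:ℂ)) (t := (q:ℂ))
    (by simpa using hp) (by simpa using hq)
  have hbeta : Complex.betaIntegral p q
      = ((∫ x in Set.Ioc (0:ℝ) 1, x ^ (p - 1) * (1 - x) ^ (q - 1) : ℝ) : ℂ) := by
    rw [Complex.betaIntegral, intervalIntegral.integral_of_le zero_le_one]
    calc ∫ x in Set.Ioc (0:ℝ) 1, (x : ℂ) ^ ((p:ℂ) - 1) * (1 - (x:ℂ)) ^ ((q:ℂ) - 1)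
        = ∫ x in Set.Ioc (0:ℝ) 1, ((x ^ (p - 1) * (1 - x) ^ (q - 1) : ℝ) : ℂ) :=
          setIntegral_congr_fun measurableSet_Ioc (fun x hx => beta_integrand_eq hx.1.le hx.2)
      _ = _ := integral_ofReal
  rw [hbeta, ← Complex.ofReal_add, Complex.Gamma_ofReal, Complex.Gamma_ofReal,
    Complex.Gamma_ofReal] at h
  have hpq : Real.Gamma (p + q) ≠ 0 := (Real.Gamma_pos_of_pos (by linarith)).ne'
  have : Real.Gamma p * Real.Gamma q
      = Real.Gamma (p + q) * ∫ x in Set.Ioc (0:ℝ) 1, x ^ (p - 1) * (1 - x) ^ (q - 1) := by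
    exact_mod_cast h
  field_simp [hpq] at this ⊢
  linarith [this]

theorem kummer_euler_integral (a c ξ : ℝ) (ha : 0 < a) (hac : a < c) :
    Summable (fun r : ℕ =>
      (ascPochhammer ℝ r).eval a / ((ascPochhammer ℝ r).eval c * (Nat.factorial r)) * ξ ^ r) ∧
    (Real.Gamma c / (Real.Gamma a * Real.Gamma (c - a))) *
        (∫ x in (0:ℝ)..1, x ^ (a - 1) * (1 - x) ^ (c - a - 1) * Real.exp (ξ * x))
      = ∑' r : ℕ,
          (ascPochhammer ℝ r).eval a / ((ascPochhammer ℝ r).eval c * (Nat.factorial r)) * ξ ^ r := by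
  have hc : 0 < c := lt_trans ha hac
  have hca : 0 < c - a := sub_pos.2 hac
  -- Summability
  have hsum : Summable (fun r : ℕ =>
      (ascPochhammer ℝ r).eval a / ((ascPochhammer ℝ r).eval c * (Nat.factorial r)) * ξ ^ r) := by
    apply Summable.of_norm_bounded (Real.summable_pow_div_factorial |ξ|)
    intro r
    have hpa := ascPochhammer_pos r a ha
    have hpc := ascPochhammer_pos r c hc
    have hfac : (0:ℝ) < (Nat.factorial r : ℝ) := by positivity
    have hle := ascPoch_mono ha hac.le r
    have key : (ascPochhammer ℝ r).eval a / ((ascPochhammer ℝ r).eval c * r.factorial)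
        ≤ 1 / r.factorial := by
      rw [div_le_div_iff₀ (by positivity) hfac]
      nlinarith
    calc ‖(ascPochhammer ℝ r).eval a / ((ascPochhammer ℝ r).eval c * r.factorial) * ξ ^ r‖
        = (ascPochhammer ℝ r).eval a / ((ascPochhammer ℝ r).eval c * r.factorial) * |ξ| ^ r := by
          rw [norm_mul, Real.norm_eq_abs, Real.norm_eq_abs, abs_pow,
            abs_of_pos (by positivity)]
      _ ≤ 1 / r.factorial * |ξ| ^ r := by
          exact mul_le_mul_of_nonneg_right key (by positivity)
      _ = |ξ| ^ r / r.factorial := by ring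
  refine ⟨hsum, ?_⟩
  -- the term functions
  set F : ℕ → ℝ → ℝ := fun r x =>
    x ^ (a - 1) * (1 - x) ^ (c - a - 1) * ((ξ * x) ^ r / r.factorial) with hF
  have hInt : ∀ r : ℕ, IntegrableOn (F r) (Set.Ioc (0:ℝ) 1) := by
    intro r
    have h0 := (betaReal_integrable (p := a + r) (q := c - a) (by positivity) hca).const_mul
      (ξ ^ r / r.factorial)
    refine IntegrableOn.congr_fun h0 (fun x hx => ?_) measurableSet_Ioc
    have hx0 : (0:ℝ) < x := hx.1
    rw [hF]
    simp only []
    have hxr : x ^ (a + r - 1) = x ^ (a - 1) * x ^ r := by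
      rw [← Real.rpow_natCast x r, ← Real.rpow_add hx0]; ring_nf
    rw [hxr, mul_pow]
    ring
  have hIntEval : ∀ r : ℕ, ∫ x in Set.Ioc (0:ℝ) 1, F r x
      = ξ ^ r / r.factorial *
        (Real.Gamma (a + r) * Real.Gamma (c - a) / Real.Gamma (c + r)) := by
    intro r
    have heq : ∫ x in Set.Ioc (0:ℝ) 1, F r x
        = ∫ x in Set.Ioc (0:ℝ) 1,
            ξ ^ r / r.factorial * (x ^ (a + r - 1) * (1 - x) ^ (c - a - 1)) := by
      refine setIntegral_congr_fun measurableSet_Ioc (fun x hx => ?_)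
      have hx0 : (0:ℝ) < x := hx.1
      rw [hF]
      simp only []
      have hxr : x ^ (a + r - 1) = x ^ (a - 1) * x ^ r := by
        rw [← Real.rpow_natCast x r, ← Real.rpow_add hx0]; ring_nf
      rw [hxr, mul_pow]
      ring
    rw [heq, MeasureTheory.integral_const_mul, betaReal_eq (by positivity) hca]
    have : a + (r:ℝ) + (c - a) = c + r := by ring
    rw [this]
  -- summability of integrals of norms
  set B0 : ℝ := ∫ x in Set.Ioc (0:ℝ) 1, x ^ (a - 1) * (1 - x) ^ (c - a - 1) with hB0
  have hNormBound : ∀ r : ℕ, (∫ x in Set.Ioc (0:ℝ) 1, ‖F r x‖) ≤ |ξ| ^ r / r.factorial * B0 := by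
    intro r
    have h1 : (∫ x in Set.Ioc (0:ℝ) 1, ‖F r x‖)
        ≤ ∫ x in Set.Ioc (0:ℝ) 1,
            |ξ| ^ r / r.factorial * (x ^ (a - 1) * (1 - x) ^ (c - a - 1)) := by
      refine setIntegral_mono_on (hInt r).norm
        ((betaReal_integrable ha hca).const_mul _) measurableSet_Ioc (fun x hx => ?_)
      have hx0 : (0:ℝ) < x := hx.1
      have hx1 : x ≤ 1 := hx.2
      have h1x : (0:ℝ) ≤ 1 - x := by linarith
      have hxa : (0:ℝ) ≤ x ^ (a - 1) := Real.rpow_nonneg hx0.le _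
      have hxb : (0:ℝ) ≤ (1 - x) ^ (c - a - 1) := Real.rpow_nonneg h1x _
      rw [hF]
      simp only []
      rw [norm_mul, norm_mul, norm_div, Real.norm_eq_abs, Real.norm_eq_abs, Real.norm_eq_abs,
        Real.norm_eq_abs, abs_of_nonneg hxa, abs_of_nonneg hxb,
        abs_of_nonneg (by positivity : (0:ℝ) ≤ (r.factorial : ℝ)), abs_pow, abs_mul]
      have hxr : |x| ^ r ≤ 1 := by
        rw [abs_of_pos hx0]; exact pow_le_one₀ hx0.le hx1
      have : |ξ| ^ r * |x| ^ r ≤ |ξ| ^ r * 1 :=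
        mul_le_mul_of_nonneg_left hxr (by positivity)
      calc x ^ (a - 1) * (1 - x) ^ (c - a - 1) * ((|ξ| * |x|) ^ r / r.factorial)
          ≤ x ^ (a - 1) * (1 - x) ^ (c - a - 1) * (|ξ| ^ r / r.factorial) := by
            apply mul_le_mul_of_nonneg_left _ (by positivity)
            apply div_le_div_of_nonneg_right _ (by positivity)
            · rw [mul_pow]; linarith
        _ = |ξ| ^ r / r.factorial * (x ^ (a - 1) * (1 - x) ^ (c - a - 1)) := by ring
    rw [MeasureTheory.integral_const_mul] at h1
    exact h1
  have hNormSum : Summable (fun r : ℕ => ∫ x in Set.Ioc (0:ℝ) 1, ‖F r x‖) := by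
    refine Summable.of_nonneg_of_le (fun r => integral_nonneg (fun x => norm_nonneg _))
      hNormBound ?_
    exact (Real.summable_pow_div_factorial |ξ|).mul_right B0
  have hswap := MeasureTheory.integral_tsum_of_summable_integral_norm hInt hNormSum
  -- rewrite the integrand as a tsum
  have hpt : ∀ x ∈ Set.Ioc (0:ℝ) 1,
      (∑' r : ℕ, F r x) = x ^ (a - 1) * (1 - x) ^ (c - a - 1) * Real.exp (ξ * x) := by
    intro x _
    rw [hF]
    simp only []
    rw [tsum_mul_left, Real.exp_eq_exp_ℝ, NormedSpace.exp_eq_tsum_div]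
  have hmain : (∫ x in (0:ℝ)..1, x ^ (a - 1) * (1 - x) ^ (c - a - 1) * Real.exp (ξ * x))
      = ∑' r : ℕ, ∫ x in Set.Ioc (0:ℝ) 1, F r x := by
    rw [intervalIntegral.integral_of_le zero_le_one, hswap]
    exact (setIntegral_congr_fun measurableSet_Ioc hpt).symm
  rw [hmain, ← tsum_mul_left]
  refine tsum_congr (fun r => ?_)
  rw [hIntEval r]
  have hGa : Real.Gamma (a + r) = (ascPochhammer ℝ r).eval a * Real.Gamma a :=
    Gamma_ascPoch a ha r
  have hGc : Real.Gamma (c + r) = (ascPochhammer ℝ r).eval c * Real.Gamma c :=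
    Gamma_ascPoch c hc r
  rw [hGa, hGc]
  have hpa := ascPochhammer_pos r a ha
  have hpc := ascPochhammer_pos r c hc
  have h1 : Real.Gamma a ≠ 0 := (Real.Gamma_pos_of_pos ha).ne'
  have h2 : Real.Gamma c ≠ 0 := (Real.Gamma_pos_of_pos hc).ne'
  have h3 : Real.Gamma (c - a) ≠ 0 := (Real.Gamma_pos_of_pos hca).ne'
  have h4 : (r.factorial : ℝ) ≠ 0 := by positivity
  field_simp
end

section
/- The autocorrelation of sequences generated by the ergodic logistic map f₄ satisfies C₄(m) := ∫₀¹ x · f₄^m(x) · (1/π)·(x(1−x))^(−1/2) dx = 1/4 + (1/8)·δ_{m,0} for every natural number m, i.e. C₄(0) = 3/8 and C₄(m) = 1/4 for all m ≥ 1. Here f₄^m denotes the m-fold iterate of f₄. -/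
open MeasureTheory Real

open Set

lemma f4_iterate (m : ℕ) (θ : ℝ) : f4^[m] (sin θ ^ 2) = sin ((2:ℝ)^m * θ) ^ 2 := by
  induction m generalizing θ with
  | zero => simp
  | succ n ih =>
    rw [Function.iterate_succ_apply]
    have h1 : f4 (sin θ ^ 2) = sin (2*θ) ^ 2 := by
      rw [f4, sin_two_mul]
      have := sin_sq_add_cos_sq θ
      nlinarith [this]
    rw [h1, ih (2*θ)]
    ring_nf

lemma cos_int_zero (k : ℕ) (hk : 1 ≤ k) :
    ∫ θ in (0:ℝ)..(π/2), cos (2*(k:ℝ)*θ) = 0 := by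
  have ha : (2*(k:ℝ)) ≠ 0 := by positivity
  have : ∫ θ in (0:ℝ)..(π/2), cos ((2*(k:ℝ))*θ) = sin ((2*(k:ℝ))*(π/2)) / (2*(k:ℝ)) := by
    rw [intervalIntegral.integral_comp_mul_left (fun x => cos x) ha, integral_cos]
    simp [mul_comm]
    ring
  simp only [mul_assoc] at this ⊢
  rw [this]
  have : (2*(k:ℝ))*(π/2) = (k:ℝ)*π := by ring
  rw [show (2:ℝ)*((k:ℝ)*(π/2)) = (k:ℝ)*π by ring, sin_nat_mul_pi, zero_div]

lemma pointwise_trig (c θ : ℝ) :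
    sin θ ^ 2 * sin (c * θ) ^ 2 =
      1/4 - 1/4 * cos (2*θ) - 1/4 * cos (2*c*θ)
        + 1/8 * cos ((2*c+2)*θ) + 1/8 * cos ((2*c-2)*θ) := by
  have h : ∀ x : ℝ, sin x ^ 2 = 1/2 - cos (2*x)/2 := by
    intro x; rw [sin_sq, cos_sq]; ring
  have e1 : (2*c+2)*θ = 2*(c*θ) + 2*θ := by ring
  have e2 : (2*c-2)*θ = 2*(c*θ) - 2*θ := by ring
  have e3 : 2*c*θ = 2*(c*θ) := by ring
  rw [e1, e2, e3, cos_add, cos_sub, h θ, h (c*θ)]; ring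

lemma trig_integral (k : ℕ) (hk : 1 ≤ k) :
    ∫ θ in (0:ℝ)..(π/2), sin θ ^ 2 * sin ((k:ℝ) * θ) ^ 2
      = π/8 + (if k = 1 then π/16 else 0) := by
  have hcont : ∀ a : ℝ, IntervalIntegrable (fun θ => cos (a*θ)) volume 0 (π/2) :=
    fun a => (continuous_cos.comp (continuous_const.mul continuous_id)).intervalIntegrable _ _
  have hc : ∀ a b : ℝ, IntervalIntegrable (fun θ => b * cos (a*θ)) volume 0 (π/2) :=
    fun a b => (hcont a).const_mul b
  rw [intervalIntegral.integral_congr (fun θ _ => pointwise_trig (k:ℝ) θ)]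
  rw [intervalIntegral.integral_add (((((intervalIntegrable_const).sub (hc 2 (1/4))).sub
        (hc (2*(k:ℝ)) (1/4))).add (hc (2*(k:ℝ)+2) (1/8)))) (hc (2*(k:ℝ)-2) (1/8)),
      intervalIntegral.integral_add (((intervalIntegrable_const).sub (hc 2 (1/4))).sub
        (hc (2*(k:ℝ)) (1/4))) (hc (2*(k:ℝ)+2) (1/8)),
      intervalIntegral.integral_sub ((intervalIntegrable_const).sub (hc 2 (1/4)))
        (hc (2*(k:ℝ)) (1/4)),
      intervalIntegral.integral_sub (intervalIntegrable_const) (hc 2 (1/4))]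
  simp only [intervalIntegral.integral_const_mul]
  have h1 : ∫ θ in (0:ℝ)..(π/2), cos (2*θ) = 0 := by
    have := cos_int_zero 1 le_rfl; simpa using this
  have h2 : ∫ θ in (0:ℝ)..(π/2), cos (2*(k:ℝ)*θ) = 0 := cos_int_zero k hk
  have h3 : ∫ θ in (0:ℝ)..(π/2), cos ((2*(k:ℝ)+2)*θ) = 0 := by
    have := cos_int_zero (k+1) (by omega)
    have e : (2*(k:ℝ)+2) = 2*((k:ℝ)+1) := by ring
    push_cast at this
    simp only [e]
    exact this
  rw [h1, h2, h3]
  by_cases hk1 : k = 1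
  · subst hk1
    have h5 : ∫ θ in (0:ℝ)..(π/2), cos ((2*((1:ℕ):ℝ)-2)*θ) = π/2 := by
      norm_num
    rw [h5]
    norm_num
    ring
  · have hk2 : 2 ≤ k := by omega
    have h4 : ∫ θ in (0:ℝ)..(π/2), cos ((2*(k:ℝ)-2)*θ) = 0 := by
      have := cos_int_zero (k-1) (by omega)
      have e : (2*(k:ℝ)-2) = 2*((k:ℝ)-1) := by ring
      have ec : ((k-1 : ℕ):ℝ) = (k:ℝ)-1 := by
        have : (1:ℕ) ≤ k := hk; push_cast [this]; ring
      rw [ec] at this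
      simp only [e]
      exact this
    rw [h4]
    simp [hk1]
    ring

lemma sin_sq_image : (fun θ : ℝ => sin θ ^ 2) '' Ioo 0 (π/2) = Ioo (0:ℝ) 1 := by
  ext y
  constructor
  · rintro ⟨θ, ⟨h0, h1⟩, rfl⟩
    have hs : 0 < sin θ := sin_pos_of_pos_of_lt_pi h0 (h1.trans (by linarith [pi_pos]))
    have hs1 : sin θ < 1 := by
      have := cos_pos_of_mem_Ioo ⟨by linarith [pi_pos], h1⟩
      nlinarith [sin_sq_add_cos_sq θ]
    constructor
    · positivity
    · show sin θ ^ 2 < 1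
      nlinarith
  · rintro ⟨h0, h1⟩
    refine ⟨arcsin (Real.sqrt y), ⟨?_, ?_⟩, ?_⟩
    · exact arcsin_pos.2 (Real.sqrt_pos.2 h0)
    · exact arcsin_lt_pi_div_two.2 (by rw [show (1:ℝ) = Real.sqrt 1 by simp]; exact Real.sqrt_lt_sqrt h0.le h1)
    · show sin (arcsin (Real.sqrt y)) ^ 2 = y
      rw [sin_arcsin (by linarith [Real.sqrt_nonneg y]) (Real.sqrt_le_one.2 h1.le), Real.sq_sqrt h0.le]

lemma sin_sq_injOn : InjOn (fun θ : ℝ => sin θ ^ 2) (Ioo 0 (π/2)) := by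
  have hmono : StrictMonoOn (fun θ : ℝ => sin θ ^ 2) (Ioo 0 (π/2)) := by
    intro x hx y hy hxy
    have hx' : sin x < sin y := by
      apply strictMonoOn_sin ⟨by linarith [hx.1, pi_pos], by linarith [hx.2]⟩
        ⟨by linarith [hy.1, pi_pos], by linarith [hy.2]⟩ hxy
    have hsx : 0 ≤ sin x := sin_nonneg_of_nonneg_of_le_pi hx.1.le (by linarith [hx.2, pi_pos])
    simpa using pow_lt_pow_left₀ hx' hsx (by norm_num)
  exact hmono.injOn

lemma subst_lemma (g : ℝ → ℝ) :
    ∫ x in (0:ℝ)..1, g x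
      = ∫ θ in Ioo (0:ℝ) (π/2), |2 * sin θ * cos θ| * g (sin θ ^ 2) := by
  have hderiv : ∀ θ ∈ Ioo (0:ℝ) (π/2),
      HasDerivWithinAt (fun θ : ℝ => sin θ ^ 2) (2 * sin θ * cos θ) (Ioo (0:ℝ) (π/2)) θ := by
    intro θ _
    have h : HasDerivAt (fun θ : ℝ => sin θ ^ 2) (2 * sin θ * cos θ) θ := by
      have := (Real.hasDerivAt_sin θ).fun_pow 2
      simpa [mul_comm, mul_assoc, mul_left_comm] using this
    exact h.hasDerivWithinAt
  rw [intervalIntegral.integral_of_le (by norm_num : (0:ℝ) ≤ 1),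
    integral_Ioc_eq_integral_Ioo, ← sin_sq_image,
    integral_image_eq_integral_abs_deriv_smul measurableSet_Ioo hderiv sin_sq_injOn g]
  simp [smul_eq_mul]

lemma main_calc (m : ℕ) :
    (∫ x in (0:ℝ)..1, x * (f4^[m] x) * rho4 x)
      = 1/4 + 1/8 * (if m = 0 then 1 else 0) := by
  have hπ : (0:ℝ) < π := pi_pos
  rw [subst_lemma (fun x => x * (f4^[m] x) * rho4 x)]
  have hcongr : EqOn
      (fun θ => |2 * sin θ * cos θ| * ((fun x => x * (f4^[m] x) * rho4 x) (sin θ ^ 2)))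
      (fun θ => (2/π) * (sin θ ^ 2 * sin (((2^m : ℕ):ℝ) * θ) ^ 2))
      (Ioo (0:ℝ) (π/2)) := by
    intro θ ⟨h0, h1⟩
    have hs : 0 < sin θ := sin_pos_of_pos_of_lt_pi h0 (h1.trans (by linarith))
    have hc : 0 < cos θ := cos_pos_of_mem_Ioo ⟨by linarith, h1⟩
    simp only
    rw [f4_iterate m θ, rho4]
    have h1' : (sin θ ^ 2) * (1 - sin θ ^ 2) = (sin θ * cos θ)^2 := by
      rw [← cos_sq']; ring
    have h2 : ((sin θ * cos θ)^2 : ℝ) ^ (-(1:ℝ)/2) = (sin θ * cos θ)⁻¹ := by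
      rw [show (-(1:ℝ)/2) = -(1/2) by ring, Real.rpow_neg (sq_nonneg _),
        ← Real.sqrt_eq_rpow, Real.sqrt_sq (by positivity)]
    rw [h1', h2, abs_of_pos (by positivity)]
    have hcast : ((2^m : ℕ):ℝ) = (2:ℝ)^m := by push_cast; ring
    rw [hcast]
    field_simp
  rw [setIntegral_congr_fun measurableSet_Ioo hcongr, integral_const_mul,
    ← integral_Ioc_eq_integral_Ioo,
    ← intervalIntegral.integral_of_le (by positivity : (0:ℝ) ≤ π/2),
    trig_integral (2^m) Nat.one_le_two_pow]
  have h2m : (2^m = 1) ↔ (m = 0) := by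
    constructor
    · intro h; by_contra hm; have : 2 ≤ 2^m := Nat.one_lt_two_pow (by omega); omega
    · rintro rfl; rfl
  by_cases hm : m = 0
  · simp [hm, h2m]
    field_simp
    ring
  · simp [hm, h2m]
    field_simp
    norm_num

theorem autocorrelation_f4 :
    (∀ m : ℕ,
      (∫ x in (0:ℝ)..1, x * (f4^[m] x) * rho4 x)
        = 1/4 + 1/8 * (if m = 0 then 1 else 0)) ∧
    (∫ x in (0:ℝ)..1, x * (f4^[0] x) * rho4 x) = 3/8 ∧
    (∀ m : ℕ, 1 ≤ m → (∫ x in (0:ℝ)..1, x * (f4^[m] x) * rho4 x) = 1/4) := by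
  refine ⟨main_calc, ?_, ?_⟩
  · rw [main_calc 0]; norm_num
  · intro m hm
    rw [main_calc m]
    have : ¬ m = 0 := by omega
    simp [this]
end

section
/- Samples of the zero-mean sequence generated by f₄ are uncorrelated: the centered autocorrelation satisfies C̃₄(m) := ∫₀¹ (x − 1/2)·(f₄^m(x) − 1/2) · (1/π)·(x(1−x))^(−1/2) dx = (1/8)·δ_{m,0} for every natural number m; in particular C̃₄(m) = 0 for all m ≥ 1. -/
open MeasureTheory Real

open Set

lemma f4_iter_sin_sq (m : ℕ) (u : ℝ) : f4^[m] (sin u ^ 2) = sin (2 ^ m * u) ^ 2 := by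
  induction m with
  | zero => simp
  | succ n ih =>
    rw [Function.iterate_succ_apply', ih, f4]
    rw [show (2:ℝ) ^ (n+1) * u = 2 * (2 ^ n * u) by ring, sin_two_mul]
    nlinarith [sin_sq_add_cos_sq (2 ^ n * u)]

lemma sin_lt_one_of_mem {u : ℝ} (hu : u ∈ Ioo 0 (π/2)) : sin u < 1 := by
  have := strictMonoOn_sin (a := u) (b := π/2) ⟨by linarith [hu.1, pi_pos], hu.2.le⟩
    ⟨by linarith [pi_pos], le_refl _⟩ hu.2
  simpa using this

lemma image_sin_sq : (fun u : ℝ => sin u ^ 2) '' Ioo 0 (π/2) = Ioo 0 1 := by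
  ext y
  simp only [mem_image, mem_Ioo]
  constructor
  · rintro ⟨u, hu, rfl⟩
    have hs : 0 < sin u := sin_pos_of_pos_of_lt_pi hu.1 (hu.2.trans (by linarith [pi_pos]))
    have hlt : sin u < 1 := sin_lt_one_of_mem hu
    constructor <;> nlinarith
  · intro hy
    have h01 : Real.sqrt y ≤ 1 := by
      rw [show (1:ℝ) = Real.sqrt 1 by simp]
      exact Real.sqrt_le_sqrt hy.2.le
    have hlt1 : Real.sqrt y < 1 := by
      rw [show (1:ℝ) = Real.sqrt 1 by simp]
      exact Real.sqrt_lt_sqrt hy.1.le hy.2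
    refine ⟨arcsin (Real.sqrt y), ⟨arcsin_pos.2 (Real.sqrt_pos.2 hy.1), arcsin_lt_pi_div_two.2 hlt1⟩, ?_⟩
    rw [sin_arcsin (by exact le_trans (by norm_num) (Real.sqrt_nonneg y)) h01, Real.sq_sqrt hy.1.le]

lemma cos_int_integral (c : ℝ) (hc : c ≠ 0) (hsin : sin (c * (π/2)) = 0) :
    ∫ u in (0:ℝ)..(π/2), cos (c * u) = 0 := by
  rw [intervalIntegral.integral_comp_mul_left _ hc, mul_zero, integral_cos, hsin, sin_zero]
  simp

lemma cos_two_pow_integral (m : ℕ) (hm : 1 ≤ m) :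
    ∫ u in (0:ℝ)..(π/2), cos (2*u) * cos (2^(m+1) * u) = 0 := by
  have key : ∀ u : ℝ, cos (2*u) * cos (2^(m+1) * u)
      = (cos ((2^(m+1) - 2) * u) + cos ((2^(m+1) + 2) * u)) / 2 := by
    intro u
    have h1 : ((2:ℝ)^(m+1) - 2) * u = 2^(m+1)*u - 2*u := by ring
    have h2 : ((2:ℝ)^(m+1) + 2) * u = 2^(m+1)*u + 2*u := by ring
    rw [h1, h2, cos_sub, cos_add]; ring
  have h4 : (4:ℝ) ≤ 2^(m+1) := by
    calc (4:ℝ) = 2^2 := by norm_num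
    _ ≤ 2^(m+1) := by apply pow_le_pow_right₀ (by norm_num); omega
  have e1 : ∫ u in (0:ℝ)..(π/2), cos ((2^(m+1) - 2) * u) = 0 := by
    apply cos_int_integral _ (by nlinarith)
    have : ((2:ℝ)^(m+1) - 2) * (π/2) = ((2^m - 1 : ℤ) : ℝ) * π := by
      push_cast [pow_succ]; ring
    rw [this, sin_int_mul_pi]
  have e2 : ∫ u in (0:ℝ)..(π/2), cos ((2^(m+1) + 2) * u) = 0 := by
    apply cos_int_integral _ (by nlinarith)
    have : ((2:ℝ)^(m+1) + 2) * (π/2) = ((2^m + 1 : ℤ) : ℝ) * π := by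
      push_cast [pow_succ]; ring
    rw [this, sin_int_mul_pi]
  simp only [key]
  rw [intervalIntegral.integral_div, intervalIntegral.integral_add, e1, e2]
  · norm_num
  · exact (Continuous.intervalIntegrable (by continuity) _ _)
  · exact (Continuous.intervalIntegrable (by continuity) _ _)

lemma cos_sq_integral : ∫ u in (0:ℝ)..(π/2), cos (2*u) * cos (2^(0+1) * u) = π/4 := by
  have : ∀ u : ℝ, cos (2*u) * cos (2^(0+1) * u) = (fun x => cos x ^ 2) (2*u) := by
    intro u; norm_num; ring
  simp only [this]
  rw [intervalIntegral.integral_comp_mul_left (fun x => cos x ^ 2) (by norm_num : (2:ℝ) ≠ 0)]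
  rw [mul_zero, integral_cos_sq]
  simp [mul_div_assoc]
  rw [show (2:ℝ) * (π/2) = π by ring]
  simp [Real.sin_pi]
  ring

lemma main_int (m : ℕ) :
    (∫ x in (0:ℝ)..1, (x - 1/2) * (f4^[m] x - 1/2) * rho4 x)
      = 1/(2*π) * ∫ u in (0:ℝ)..(π/2), cos (2*u) * cos (2^(m+1) * u) := by
  have hpi : 0 < π := pi_pos
  rw [intervalIntegral.integral_of_le zero_le_one, integral_Ioc_eq_integral_Ioo, ← image_sin_sq]
  have hderiv : ∀ u ∈ Ioo (0:ℝ) (π/2), HasDerivWithinAt (fun u : ℝ => sin u ^ 2)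
      ((fun u : ℝ => 2 * sin u * cos u) u) (Ioo 0 (π/2)) u := by
    intro u _
    have h := ((hasDerivAt_sin u).fun_pow 2).hasDerivWithinAt (s := Ioo (0:ℝ) (π/2))
    simpa [mul_comm, mul_assoc, mul_left_comm] using h
  have hinj : InjOn (fun u : ℝ => sin u ^ 2) (Ioo 0 (π/2)) := by
    intro a ha b hb hab
    have hsa : 0 < sin a := sin_pos_of_pos_of_lt_pi ha.1 (ha.2.trans (by linarith))
    have hsb : 0 < sin b := sin_pos_of_pos_of_lt_pi hb.1 (hb.2.trans (by linarith))
    have hab' : sin a = sin b := by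
      simp only at hab; nlinarith
    exact injOn_sin ⟨by linarith [ha.1], ha.2.le⟩ ⟨by linarith [hb.1], hb.2.le⟩ hab'
  rw [integral_image_eq_integral_abs_deriv_smul measurableSet_Ioo hderiv hinj]
  have hcong : ∀ u ∈ Ioo (0:ℝ) (π/2),
      |(fun u : ℝ => 2 * sin u * cos u) u| •
        ((sin u ^ 2 - 1/2) * (f4^[m] (sin u ^ 2) - 1/2) * rho4 (sin u ^ 2))
      = 1/(2*π) * (cos (2*u) * cos (2^(m+1) * u)) := by
    intro u hu
    have hs : 0 < sin u := sin_pos_of_pos_of_lt_pi hu.1 (hu.2.trans (by linarith))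
    have hc : 0 < cos u := cos_pos_of_mem_Ioo ⟨by linarith [hu.1], hu.2⟩
    have ht : 0 < sin u * cos u := mul_pos hs hc
    have hcos2 : 1 - sin u ^ 2 = cos u ^ 2 := by linarith [sin_sq_add_cos_sq u]
    have h1 : sin u ^ 2 * (1 - sin u ^ 2) = (sin u * cos u) ^ 2 := by rw [hcos2]; ring
    have h2 : ((sin u * cos u) ^ 2 : ℝ) ^ (-(1:ℝ)/2) = (sin u * cos u)⁻¹ := by
      rw [← Real.rpow_natCast (sin u * cos u) 2, ← Real.rpow_mul ht.le]
      norm_num [Real.rpow_neg_one, mul_inv, mul_comm]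
    have hrho : rho4 (sin u ^ 2) = 1/π * (sin u * cos u)⁻¹ := by
      rw [rho4, h1, h2]
    have hA : sin u ^ 2 - 1/2 = -(cos (2*u))/2 := by
      rw [cos_two_mul]; linarith [sin_sq_add_cos_sq u]
    have hB : sin (2^m * u) ^ 2 - 1/2 = -(cos (2^(m+1) * u))/2 := by
      rw [show (2:ℝ)^(m+1) * u = 2 * (2^m * u) by ring, cos_two_mul]
      linarith [sin_sq_add_cos_sq (2^m * u)]
    rw [f4_iter_sin_sq, hrho, hA, hB, smul_eq_mul]
    simp only
    rw [abs_of_pos (by nlinarith : (0:ℝ) < 2 * sin u * cos u)]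
    field_simp
  rw [MeasureTheory.setIntegral_congr_fun measurableSet_Ioo hcong,
    ← integral_Ioc_eq_integral_Ioo,
    ← intervalIntegral.integral_of_le (by positivity : (0:ℝ) ≤ π/2),
    intervalIntegral.integral_const_mul]

theorem centered_autocorrelation_f4 :
    (∀ m : ℕ,
      (∫ x in (0:ℝ)..1, (x - 1/2) * (f4^[m] x - 1/2) * rho4 x)
        = 1/8 * (if m = 0 then 1 else 0)) ∧
    (∀ m : ℕ, 1 ≤ m →
      (∫ x in (0:ℝ)..1, (x - 1/2) * (f4^[m] x - 1/2) * rho4 x) = 0) := by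
  have key : ∀ m : ℕ,
      (∫ x in (0:ℝ)..1, (x - 1/2) * (f4^[m] x - 1/2) * rho4 x)
        = 1/8 * (if m = 0 then 1 else 0) := by
    intro m
    rw [main_int]
    cases m with
    | zero =>
      rw [cos_sq_integral, if_pos rfl]
      field_simp
      ring
    | succ n =>
      rw [cos_two_pow_integral (n+1) (by omega), if_neg (by omega)]
      ring
  exact ⟨key, fun m hm => by rw [key m, if_neg (by omega)]; ring⟩
end
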